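/- Define polynomials Q_r over ℤ by Q_0(n) = 1 and Q_{r+1}(n) = 2n^2·(Q_r(n) − Q_r(n−1)) + n·Q_r(n−1). Then for every r ≥ 0, Q_r has degree r and its leading coefficient is (2r)!/(2^r·r!) (the double factorial (2r−1)!!). -/
import Mathlib


open Polynomial

noncomputable def Qpoly : ℕ → Polynomial ℤ
  | 0 => 1
  | r + 1 =>
      2 * X ^ 2 * (Qpoly r - (Qpoly r).comp (X - 1)) + X * (Qpoly r).comp (X - 1)

open Nat in
lemma fact_eq_df (r : ℕ) : (2 * r)! = 2 ^ r * r ! * (2 * r - 1)‼ := by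
  induction r with
  | zero => rfl
  | succ s ih =>
    have h1 : 2 * (s + 1) = 2 * s + 2 := by ring
    have h2 : 2 * (s + 1) - 1 = 2 * s - 1 + 2 ∨ s = 0 := by
      rcases s with _ | t
      · right; rfl
      · left; omega
    have hfac : (2 * (s + 1))! = (2 * s + 2) * ((2 * s + 1) * (2 * s)!) := by
      rw [h1, Nat.factorial_succ, Nat.factorial_succ]
    rcases h2 with h2 | h2
    · rw [hfac, ih, h2, Nat.doubleFactorial_add_two]
      have h3 : 2 * s - 1 + 2 = 2 * s + 1 := by omega
      rw [h3, Nat.factorial_succ, pow_succ]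
      ring
    · subst h2; rfl

open Nat in
lemma df_rec (s : ℕ) : (2 * (s + 1) - 1)‼ = (2 * s + 1) * (2 * s - 1)‼ := by
  rcases s with _ | t
  · rfl
  · have h : 2 * (t + 1 + 1) - 1 = 2 * (t + 1) - 1 + 2 := by omega
    rw [h, Nat.doubleFactorial_add_two,
      show 2 * (t + 1) - 1 + 2 = 2 * (t + 1) + 1 from by omega]

open Nat in
lemma fact_div_eq (r : ℕ) : (2 * r)! / (2 ^ r * r !) = (2 * r - 1)‼ := by
  rw [fact_eq_df]
  exact Nat.mul_div_cancel_left _ (by positivity)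

/-- Coefficient formula for composition with `X - 1`. -/
lemma coeff_comp_sub_one (p : Polynomial ℤ) (N m : ℕ) (hN : p.natDegree < N) :
    (p.comp (X - 1)).coeff m =
      ∑ e ∈ Finset.range N, p.coeff e * ((-1 : ℤ) ^ (e - m) * (e.choose m : ℤ)) := by
  have hx : (X - 1 : Polynomial ℤ) = X + C (-1) := by
    rw [map_neg, map_one]; ring
  rw [comp_eq_sum_left, p.sum_over_range' (by simp) N hN, finset_sum_coeff]
  refine Finset.sum_congr rfl fun e _ => ?_
  rw [coeff_C_mul, hx, coeff_X_add_C_pow]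

lemma coeff_comp_high (p : Polynomial ℤ) (r m : ℕ) (hp : p.natDegree ≤ r) (hm : r < m) :
    (p.comp (X - 1)).coeff m = 0 := by
  rw [coeff_comp_sub_one p (r + 1) m (by omega)]
  refine Finset.sum_eq_zero fun e he => ?_
  rw [Nat.choose_eq_zero_of_lt (by simp at he; omega)]
  simp

lemma coeff_comp_top (p : Polynomial ℤ) (r : ℕ) (hp : p.natDegree ≤ r) :
    (p.comp (X - 1)).coeff r = p.coeff r := by
  rw [coeff_comp_sub_one p (r + 1) r (by omega), Finset.sum_range_succ]
  rw [Finset.sum_eq_zero fun e he => by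
    rw [Nat.choose_eq_zero_of_lt (by simpa using he)]; simp]
  simp

lemma coeff_comp_next (p : Polynomial ℤ) (s : ℕ) (hp : p.natDegree ≤ s + 1) :
    (p.comp (X - 1)).coeff s = p.coeff s - (s + 1) * p.coeff (s + 1) := by
  rw [coeff_comp_sub_one p (s + 2) s (by omega), Finset.sum_range_succ, Finset.sum_range_succ]
  rw [Finset.sum_eq_zero fun e he => by
    rw [Nat.choose_eq_zero_of_lt (by simpa using he)]; simp]
  have h1 : s + 1 - s = 1 := by omega
  have h2 : s - s = 0 := by omega
  rw [h1, h2, Nat.choose_succ_self_right, Nat.choose_self]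
  push_cast
  ring

open Nat in
lemma Qpoly_aux (r : ℕ) :
    (Qpoly r).natDegree ≤ r ∧ (Qpoly r).coeff r = ((2 * r - 1)‼ : ℤ) := by
  induction r with
  | zero => constructor <;> simp [Qpoly]
  | succ r ih =>
    obtain ⟨hdeg, hcoeff⟩ := ih
    set p := Qpoly r with hp
    set q := p.comp (X - 1) with hq
    have hQ : Qpoly (r + 1) = X ^ 2 * (2 * (p - q)) + X * q := by
      rw [Qpoly]; ring
    have hqdeg : q.natDegree ≤ r := by
      refine natDegree_le_iff_coeff_eq_zero.mpr fun N hN => ?_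
      exact coeff_comp_high p r N hdeg hN
    have hddeg : (p - q).natDegree ≤ r := le_trans (natDegree_sub_le p q) (by omega)
    -- degree bound for Qpoly (r+1)
    have hdeg' : (Qpoly (r + 1)).natDegree ≤ r + 1 := by
      rcases Nat.eq_zero_or_pos r with hr0 | hrpos
      · subst hr0
        have hx : Qpoly 1 = X := by simp [Qpoly]
        rw [hx]
        simp
      · -- here p - q has natDegree ≤ r - 1
        obtain ⟨s, rfl⟩ := Nat.exists_eq_add_of_le hrpos
        have hsub : (p - q).natDegree ≤ s := by
          refine natDegree_le_iff_coeff_eq_zero.mpr fun N hN => ?_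
          rcases lt_or_ge (1 + s) N with hN2 | hN2
          · rw [coeff_sub, coeff_comp_high p (1 + s) N hdeg hN2,
              coeff_eq_zero_of_natDegree_lt (lt_of_le_of_lt hdeg hN2), sub_zero]
          · have hNeq : N = 1 + s := by omega
            subst hNeq
            rw [coeff_sub, coeff_comp_top p (1 + s) hdeg, sub_self]
        rw [hQ]
        refine le_trans (natDegree_add_le _ _) (max_le ?_ ?_)
        · refine le_trans (natDegree_mul_le) ?_
          have h5 : (2 * (p - q) : Polynomial ℤ).natDegree ≤ s := by
            refine le_trans (natDegree_mul_le) ?_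
            simpa using hsub
          have h4 : ((X : Polynomial ℤ) ^ 2).natDegree = 2 := natDegree_X_pow 2
          omega
        · refine le_trans (natDegree_mul_le) ?_
          have h4 : (X : Polynomial ℤ).natDegree = 1 := natDegree_X
          omega
    -- top coefficient
    have hcoeff' : (Qpoly (r + 1)).coeff (r + 1) = ((2 * (r + 1) - 1)‼ : ℤ) := by
      have hd : (p - q).coeff (r - 1) = (r : ℤ) * (2 * r - 1)‼ := by
        rcases Nat.eq_zero_or_pos r with hr0 | hrpos
        · subst hr0
          have hp1 : p = 1 := hp
          have hq1 : q = 1 := by rw [hq, hp1]; simp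
          rw [hp1, hq1]; simp
        · obtain ⟨s, rfl⟩ := Nat.exists_eq_add_of_le hrpos
          have h1s : 1 + s = s + 1 := by omega
          have hnext : q.coeff s = p.coeff s - (s + 1) * p.coeff (s + 1) :=
            coeff_comp_next p s (by omega)
          have hco : p.coeff (s + 1) = ((2 * (1 + s) - 1)‼ : ℤ) := by
            rw [← h1s]; exact hcoeff
          have : 1 + s - 1 = s := by omega
          rw [this, coeff_sub, hnext, hco, h1s]
          push_cast
          ring
      have hqr : q.coeff r = ((2 * r - 1)‼ : ℤ) := by
        rw [hq, coeff_comp_top p r hdeg]; exact hcoeff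
      have e1 : (X ^ 2 * (2 * (p - q)) : Polynomial ℤ).coeff (r + 1) =
          2 * (p - q).coeff (r - 1) := by
        rcases Nat.eq_zero_or_pos r with hr0 | hrpos
        · subst hr0
          have hpq : p - q = 0 := by
            rw [hq, show p = 1 from hp]; simp
          rw [hpq]
          simp
        · obtain ⟨s, rfl⟩ := Nat.exists_eq_add_of_le hrpos
          have h2 : 1 + s + 1 = s + 2 := by omega
          have h3 : 1 + s - 1 = s := by omega
          rw [h2, h3, two_mul (p - q), two_mul ((p - q).coeff s), mul_add, coeff_add,
            coeff_X_pow_mul]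
      have e2 : (X * q : Polynomial ℤ).coeff (r + 1) = q.coeff r := coeff_X_mul q r
      rw [hQ, coeff_add, e1, e2, hd, hqr]
      have : ((2 * (r + 1) - 1)‼ : ℕ) = (2 * r + 1) * (2 * r - 1)‼ := df_rec r
      rw [this]
      push_cast
      ring
    exact ⟨hdeg', hcoeff'⟩

theorem stmt_14 (r : ℕ) :
    (Qpoly r).degree = r ∧
      (Qpoly r).leadingCoeff = ((Nat.factorial (2 * r) / (2 ^ r * Nat.factorial r) : ℕ) : ℤ) := by
  obtain ⟨hdeg, hcoeff⟩ := Qpoly_aux r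
  have hne : (Qpoly r).coeff r ≠ 0 := by
    rw [hcoeff]
    exact_mod_cast (Nat.doubleFactorial_pos _).ne'
  have hdeg' : (Qpoly r).degree = r :=
    le_antisymm (degree_le_of_natDegree_le hdeg) (le_degree_of_ne_zero hne)
  have hnat : (Qpoly r).natDegree = r := natDegree_eq_of_degree_eq_some hdeg'
  refine ⟨hdeg', ?_⟩
  rw [leadingCoeff, hnat, hcoeff, fact_div_eq]
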